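/- Let X and Y be Banach spaces and T : Y → X a bounded linear operator. Assume X admits a Lipschitz Gâteaux differentiable bump function b : X → ℝ (i.e., b is nonnegative, not identically zero, Lipschitz, everywhere Gâteaux differentiable, and has bounded support). Then T is compact if and only if for every bounded Lipschitz function f : X → ℝ which is Gâteaux differentiable at every point of X, the composition f ∘ T is Fréchet differentiable at every point of Y. -/

import Mathlib

open Filter Metric Topology

section Defs
variable {X Z : Type*} [NormedAddCommGroup X] [NormedSpace ℝ X]
  [NormedAddCommGroup Z] [NormedSpace ℝ Z]

/-- `A` is the Gâteaux derivative of `f` at `x`. -/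
def HasGateauxDerivAt (f : X → Z) (A : X →L[ℝ] Z) (x : X) : Prop :=
  ∀ h : X, Tendsto (fun t : ℝ => t⁻¹ • (f (x + t • h) - f x)) (𝓝[≠] (0 : ℝ)) (𝓝 (A h))

/-- `f` is Gâteaux differentiable at `x`. -/
def GateauxDifferentiableAt (f : X → Z) (x : X) : Prop :=
  ∃ A : X →L[ℝ] Z, HasGateauxDerivAt f A x
end Defs

section Helpers
variable {X Z : Type*} [NormedAddCommGroup X] [NormedSpace ℝ X]
  [NormedAddCommGroup Z] [NormedSpace ℝ Z]

lemma tendsto_line (x h₀ : X) :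
    Tendsto (fun t : ℝ => x + t • h₀) (𝓝[≠] (0:ℝ)) (𝓝 x) := by
  have hc : Continuous fun t : ℝ => x + t • h₀ := by fun_prop
  have := hc.tendsto 0
  simp only [zero_smul, add_zero] at this
  exact this.mono_left nhdsWithin_le_nhds

lemma HasGateauxDerivAt.congr_nhds {f g : X → Z} {A : X →L[ℝ] Z} {x : X}
    (hf : HasGateauxDerivAt f A x) (h : ∀ᶠ w in 𝓝 x, f w = g w) :
    HasGateauxDerivAt g A x := by
  intro h₀
  have hx : f x = g x := h.self_of_nhds
  refine Tendsto.congr' ?_ (hf h₀)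
  filter_upwards [(tendsto_line x h₀).eventually h] with t ht
  rw [ht, hx]

lemma hasGateaux_finset_sum {ι : Type*} (s : Finset ι) (F : ι → X → Z)
    (A : ι → X →L[ℝ] Z) (x : X) (h : ∀ i ∈ s, HasGateauxDerivAt (F i) (A i) x) :
    HasGateauxDerivAt (fun w => ∑ i ∈ s, F i w) (∑ i ∈ s, A i) x := by
  intro h₀
  have ht := tendsto_finset_sum s fun i hi => h i hi h₀
  have : (∑ i ∈ s, A i) h₀ = ∑ i ∈ s, (A i) h₀ := by
    simp
  rw [this]
  refine Tendsto.congr (fun t => ?_) ht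
  rw [← Finset.sum_sub_distrib, Finset.smul_sum]

end Helpers

section Forward
variable {X : Type*} [NormedAddCommGroup X] [NormedSpace ℝ X]

lemma lip_abs_le {f : X → ℝ} {L : NNReal} (hf : LipschitzWith L f) (a c : X) :
    |f a - f c| ≤ L * ‖a - c‖ := by
  have := hf.dist_le_mul a c
  rwa [Real.dist_eq, dist_eq_norm] at this

lemma uniform_gateaux {f : X → ℝ} {L : NNReal} (hL : LipschitzWith L f)
    {A : X →L[ℝ] ℝ} {x : X} (hA : HasGateauxDerivAt f A x)
    {K : Set X} (hK : IsCompact K) {ε : ℝ} (hε : 0 < ε) :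
    ∃ δ > 0, ∀ u ∈ K, ∀ t : ℝ, t ≠ 0 → |t| < δ →
      |f (x + t • u) - f x - t * A u| ≤ ε * |t| := by
  set r : ℝ := ε / (2 * (L + ‖A‖ + 1)) with hr
  have hden : (0:ℝ) < 2 * (L + ‖A‖ + 1) := by positivity
  have hrpos : 0 < r := by positivity
  -- pointwise δ
  have key : ∀ u : X, ∃ δ > 0, ∀ t : ℝ, t ≠ 0 → |t| < δ →
      |f (x + t • u) - f x - t * A u| ≤ (ε/2) * |t| := by
    intro u
    have := hA u
    rw [Metric.tendsto_nhdsWithin_nhds] at this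
    obtain ⟨δ, hδ, hd⟩ := this (ε/2) (by positivity)
    refine ⟨δ, hδ, fun t ht htδ => ?_⟩
    have h1 : dist t (0:ℝ) < δ := by simpa [Real.dist_eq] using htδ
    have := hd (by simpa using ht) h1
    rw [Real.dist_eq] at this
    have h2 : |t⁻¹ • (f (x + t • u) - f x) - A u| ≤ ε/2 := le_of_lt this
    calc |f (x + t • u) - f x - t * A u|
        = |t| * |t⁻¹ • (f (x + t • u) - f x) - A u| := by
          rw [← abs_mul]
          congr 1
          rw [smul_eq_mul, mul_sub, ← mul_assoc, mul_inv_cancel₀ ht, one_mul]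
      _ ≤ |t| * (ε/2) := by
          exact mul_le_mul_of_nonneg_left h2 (abs_nonneg t)
      _ = (ε/2) * |t| := by ring
  classical
  choose! D hD1 hD2 using key
  obtain ⟨s, hsK, hcov⟩ := hK.elim_nhds_subcover (fun u => ball u r)
    (fun u _ => ball_mem_nhds u hrpos)
  by_cases hs : s.Nonempty
  · refine ⟨s.inf' hs D, ?_, ?_⟩
    · simp only [gt_iff_lt, Finset.lt_inf'_iff]
      exact fun u _ => hD1 u
    · intro u hu t ht htδ
      obtain ⟨v, hvmem, hvball⟩ := Set.mem_iUnion₂.1 (hcov hu)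
      have hdv : ‖u - v‖ < r := by
        rw [mem_ball, dist_eq_norm] at hvball; exact hvball
      have htv : |t| < D v := lt_of_lt_of_le htδ (Finset.inf'_le D hvmem)
      have h2 := hD2 v t ht htv
      have hlip : |f (x + t • u) - f (x + t • v)| ≤ L * (|t| * r) := by
        have := lip_abs_le hL (x + t • u) (x + t • v)
        have he : ‖(x + t • u) - (x + t • v)‖ = |t| * ‖u - v‖ := by
          rw [add_sub_add_left_eq_sub, ← smul_sub, norm_smul, Real.norm_eq_abs]
        rw [he] at this
        refine this.trans ?_
        have : (L:ℝ) * (|t| * ‖u - v‖) ≤ L * (|t| * r) := by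
          have := mul_le_mul_of_nonneg_left hdv.le (abs_nonneg t)
          exact mul_le_mul_of_nonneg_left this L.coe_nonneg
        exact this
      have hA2 : |t * A v - t * A u| ≤ ‖A‖ * (|t| * r) := by
        have : |t * A v - t * A u| = |t| * |A (v - u)| := by
          rw [← abs_mul]; congr 1; rw [map_sub]; ring
        rw [this]
        have h3 : |A (v - u)| ≤ ‖A‖ * ‖v - u‖ := A.le_opNorm (v - u)
        have h4 : ‖v - u‖ < r := by rwa [norm_sub_rev] at hdv
        calc |t| * |A (v - u)| ≤ |t| * (‖A‖ * r) := by
              refine mul_le_mul_of_nonneg_left ?_ (abs_nonneg t)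
              exact h3.trans (mul_le_mul_of_nonneg_left h4.le (norm_nonneg A))
          _ = ‖A‖ * (|t| * r) := by ring
      calc |f (x + t • u) - f x - t * A u|
          ≤ |f (x + t • u) - f (x + t • v)| + |f (x + t • v) - f x - t * A v|
            + |t * A v - t * A u| := by
            have : f (x + t • u) - f x - t * A u =
              (f (x + t • u) - f (x + t • v)) + (f (x + t • v) - f x - t * A v)
              + (t * A v - t * A u) := by ring
            rw [this]
            exact (abs_add_three _ _ _)
        _ ≤ L * (|t| * r) + (ε/2) * |t| + ‖A‖ * (|t| * r) := by
            gcongr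
        _ = ((L + ‖A‖) * r) * |t| + (ε/2) * |t| := by ring
        _ ≤ (ε/2) * |t| + (ε/2) * |t| := by
            gcongr
            have h5 : (L + ‖A‖ : ℝ) * r ≤ (L + ‖A‖ + 1) * r := by
              have : (0:ℝ) ≤ r := hrpos.le
              nlinarith
            refine h5.trans ?_
            rw [hr]
            rw [div_eq_iff hden.ne'] at *
            field_simp
            nlinarith [L.coe_nonneg, norm_nonneg A]
        _ = ε * |t| := by ring
  · refine ⟨1, one_pos, fun u hu => ?_⟩
    exfalso
    obtain ⟨v, hvmem, _⟩ := Set.mem_iUnion₂.1 (hcov hu)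
    exact hs ⟨v, hvmem⟩

end Forward

section FwdMain
variable {X Y : Type*} [NormedAddCommGroup X] [NormedSpace ℝ X]
  [NormedAddCommGroup Y] [NormedSpace ℝ Y]

lemma forward_dir (T : Y →L[ℝ] X)
    (hcpt : IsCompact (closure (⇑T '' closedBall 0 1)))
    (f : X → ℝ) {L : NNReal} (hlip : LipschitzWith L f)
    (hG : ∀ x, GateauxDifferentiableAt f x) (y : Y) :
    DifferentiableAt ℝ (f ∘ T) y := by
  obtain ⟨A, hA⟩ := hG (T y)
  refine HasFDerivAt.differentiableAt (f' := A.comp T) ?_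
  rw [hasFDerivAt_iff_isLittleO_nhds_zero, Asymptotics.isLittleO_iff]
  intro c hc
  obtain ⟨δ, hδ, hkey⟩ := uniform_gateaux hlip hA hcpt hc
  filter_upwards [Metric.ball_mem_nhds (0:Y) hδ] with k hk
  by_cases hk0 : k = 0
  · simp [hk0]
  · have hkn : (0:ℝ) < ‖k‖ := norm_pos_iff.2 hk0
    set u : X := T (‖k‖⁻¹ • k) with hu_def
    have hu : u ∈ closure (⇑T '' closedBall 0 1) := by
      refine subset_closure ⟨‖k‖⁻¹ • k, ?_, rfl⟩
      rw [mem_closedBall, dist_zero_right, norm_smul, norm_inv, norm_norm,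
        inv_mul_cancel₀ hkn.ne']
    have hTk : T k = ‖k‖ • u := by
      rw [hu_def, ← map_smul, smul_smul, mul_inv_cancel₀ hkn.ne', one_smul]
    have htlt : |(‖k‖ : ℝ)| < δ := by
      rw [abs_of_nonneg (norm_nonneg k)]
      rwa [mem_ball, dist_zero_right] at hk
    have := hkey u hu ‖k‖ hkn.ne' htlt
    have heq : f (T (y + k)) - f (T y) - (A.comp T) k
        = f (T y + ‖k‖ • u) - f (T y) - ‖k‖ * A u := by
      rw [map_add, hTk, ContinuousLinearMap.comp_apply, hTk, map_smul,
        smul_eq_mul]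
    calc ‖(f ∘ T) (y + k) - (f ∘ T) y - (A.comp T) k‖
        = |f (T y + ‖k‖ • u) - f (T y) - ‖k‖ * A u| := by
          rw [Function.comp_apply, Function.comp_apply, ← heq, Real.norm_eq_abs]
      _ ≤ c * |(‖k‖:ℝ)| := this
      _ = c * ‖k‖ := by rw [abs_of_nonneg (norm_nonneg k)]

end FwdMain

section Sep
variable {X : Type*} [NormedAddCommGroup X] [NormedSpace ℝ X]

lemma exists_sep_seq [CompleteSpace X] {s : Set X}
    (h : ¬ IsCompact (closure s)) :
    ∃ ε > 0, ∃ x : ℕ → X, (∀ n, x n ∈ s) ∧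
      ∀ m n, m ≠ n → ε ≤ ‖x m - x n‖ := by
  classical
  have htb : ¬ TotallyBounded s := by
    intro htb
    exact h (TotallyBounded.isCompact_of_isClosed htb.closure isClosed_closure)
  rw [Metric.totallyBounded_iff] at htb
  push_neg at htb
  obtain ⟨ε, hε, hcov⟩ := htb
  have key : ∀ t : Finset X, ∃ z, z ∈ s ∧ ∀ w ∈ t, ε ≤ dist z w := by
    intro t
    have hnsub := hcov ↑t t.finite_toSet
    rw [Set.not_subset] at hnsub
    obtain ⟨z, hzs, hz⟩ := hnsub
    refine ⟨z, hzs, fun w hw => ?_⟩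
    by_contra hlt
    push_neg at hlt
    exact hz (Set.mem_biUnion hw (by rwa [mem_ball]))
  choose g hg1 hg2 using key
  let F : ℕ → Finset X := fun n => Nat.rec ∅ (fun _ t => insert (g t) t) n
  have hF : ∀ n, F (n+1) = insert (g (F n)) (F n) := fun n => rfl
  set x : ℕ → X := fun n => g (F n) with hx
  have hmem : ∀ m n, m < n → x m ∈ F n := by
    intro m n hmn
    induction n with
    | zero => omega
    | succ k ih =>
      rw [hF k]
      rcases Nat.lt_succ_iff_lt_or_eq.1 hmn with h' | h'
      · exact Finset.mem_insert_of_mem (ih h')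
      · subst h'; exact Finset.mem_insert_self _ _
  have hsep : ∀ m n, m < n → ε ≤ ‖x n - x m‖ := by
    intro m n hmn
    have := hg2 (F n) (x m) (hmem m n hmn)
    rwa [dist_eq_norm] at this
  refine ⟨ε, hε, x, fun n => hg1 (F n), fun m n hmn => ?_⟩
  rcases lt_or_gt_of_ne hmn with h' | h'
  · rw [norm_sub_rev]; exact hsep m n h'
  · exact hsep n m h'

lemma line_bad_finite {ε M : ℝ} (hε : 0 < ε) (x : ℕ → X)
    (hsep : ∀ m n, m ≠ n → ε ≤ ‖x m - x n‖) (hM : ∀ n, ‖x n‖ ≤ M) (h : X) :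
    {n : ℕ | ∃ s : ℝ, ‖x n - s • h‖ ≤ ε/4}.Finite := by
  classical
  by_contra hinf
  replace hinf : {n : ℕ | ∃ s : ℝ, ‖x n - s • h‖ ≤ ε/4}.Infinite := hinf
  by_cases hh : h = 0
  · have hmt : Set.MapsTo (fun _ : ℕ => (0:ℕ))
        {n : ℕ | ∃ s : ℝ, ‖x n - s • h‖ ≤ ε/4} {0} := by intro n _; simp
    obtain ⟨m, hm, n, hn, hmn, -⟩ :=
      hinf.exists_ne_map_eq_of_mapsTo hmt (Set.finite_singleton 0)
    obtain ⟨sm, hsm⟩ := hm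
    obtain ⟨sn, hsn⟩ := hn
    rw [hh, smul_zero, sub_zero] at hsm hsn
    have h1 := hsep m n hmn
    have h2 : ‖x m - x n‖ ≤ ‖x m‖ + ‖x n‖ := norm_sub_le _ _
    linarith
  · have hhn : (0:ℝ) < ‖h‖ := norm_pos_iff.2 hh
    set η : ℝ := ε / (4 * (‖h‖ + 1)) with hη
    have hηpos : 0 < η := by positivity
    set c : ℝ := (M + ε) / ‖h‖ with hc
    have hch : ∀ n ∈ {n : ℕ | ∃ s : ℝ, ‖x n - s • h‖ ≤ ε/4},
        ∃ s : ℝ, ‖x n - s • h‖ ≤ ε/4 := fun n hn => hn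
    choose! sv hsv using hch
    have hsb : ∀ n ∈ {n : ℕ | ∃ s : ℝ, ‖x n - s • h‖ ≤ ε/4}, |sv n| ≤ c := by
      intro n hn
      have h1 := hsv n hn
      have h2 : ‖sv n • h‖ ≤ ‖x n‖ + ‖x n - sv n • h‖ := by
        have h2' := norm_sub_le (x n) (x n - sv n • h)
        rwa [sub_sub_cancel] at h2'
      have h3 : |sv n| * ‖h‖ ≤ M + ε := by
        rw [← Real.norm_eq_abs, ← norm_smul]
        have := hM n
        linarith
      rw [hc, le_div_iff₀ hhn]
      exact h3
    have hmaps : Set.MapsTo (fun n => ⌊sv n / η⌋)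
        {n : ℕ | ∃ s : ℝ, ‖x n - s • h‖ ≤ ε/4}
        (Set.Icc ⌊-c / η⌋ ⌊c / η⌋) := by
      intro n hn
      have hb := abs_le.1 (hsb n hn)
      exact ⟨Int.floor_le_floor (by gcongr; exact hb.1),
        Int.floor_le_floor (by gcongr; exact hb.2)⟩
    obtain ⟨m, hm, n, hn, hmn, heq⟩ :=
      hinf.exists_ne_map_eq_of_mapsTo hmaps (Set.finite_Icc _ _)
    have hsmn : |sv m - sv n| ≤ η := by
      have h1 := Int.floor_le (sv m / η)
      have h2 := Int.lt_floor_add_one (sv m / η)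
      have h3 := Int.floor_le (sv n / η)
      have h4 := Int.lt_floor_add_one (sv n / η)
      rw [heq] at h1 h2
      have hd : |sv m / η - sv n / η| ≤ 1 := by
        rw [abs_le]; constructor <;> linarith
      have he2 : sv m - sv n = (sv m / η - sv n / η) * η := by
        field_simp
      rw [he2, abs_mul, abs_of_pos hηpos]
      nlinarith
    have hsepmn := hsep m n hmn
    have htri : ‖x m - x n‖ ≤ ‖x m - sv m • h‖ + ‖sv m • h - sv n • h‖
        + ‖sv n • h - x n‖ := by
      have he : x m - x n = (x m - sv m • h) + (sv m • h - sv n • h)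
          + (sv n • h - x n) := by abel
      rw [he]
      exact norm_add₃_le
    have h5 : ‖sv m • h - sv n • h‖ = |sv m - sv n| * ‖h‖ := by
      rw [← sub_smul, norm_smul, Real.norm_eq_abs]
    have h6 : ‖sv n • h - x n‖ ≤ ε/4 := by
      rw [norm_sub_rev]; exact hsv n hn
    have h7 : |sv m - sv n| * ‖h‖ ≤ η * ‖h‖ :=
      mul_le_mul_of_nonneg_right hsmn (norm_nonneg h)
    have h8 : η * ‖h‖ < ε/4 := by
      rw [hη]
      rw [div_mul_eq_mul_div, div_lt_iff₀ (by positivity)]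
      nlinarith
    have := hsv m hm
    linarith
end Sep

section Bad
variable {X Y : Type*} [NormedAddCommGroup X] [NormedSpace ℝ X]
  [NormedAddCommGroup Y] [NormedSpace ℝ Y]

set_option maxHeartbeats 2000000 in
lemma exists_bad (T : Y →L[ℝ] X) (b : X → ℝ) (hb_nonneg : ∀ x, 0 ≤ b x)
    (hb_ne : b ≠ 0) {K₀ : NNReal} (hb_lip : LipschitzWith K₀ b)
    (hb_gateaux : ∀ x, GateauxDifferentiableAt b x)
    (hb_supp : Bornology.IsBounded (tsupport b))
    {ε : ℝ} (hε : 0 < ε) (y : ℕ → Y) (hy : ∀ n, ‖y n‖ ≤ 1)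
    (hlow : ∀ n, ε/2 ≤ ‖T (y n)‖)
    (hsep : ∀ m n, m ≠ n → ε ≤ ‖T (y m) - T (y n)‖) :
    ∃ f : X → ℝ, (∃ C : ℝ, ∀ x, |f x| ≤ C) ∧ (∃ K : NNReal, LipschitzWith K f) ∧
      (∀ x, GateauxDifferentiableAt f x) ∧ ¬ DifferentiableAt ℝ (f ∘ T) 0 := by
  classical
  set x : ℕ → X := fun n => T (y n) with hxdef
  have hsepx : ∀ m n, m ≠ n → ε ≤ ‖x m - x n‖ := hsep
  have hlowx : ∀ n, ε/2 ≤ ‖x n‖ := hlow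
  set M : ℝ := ‖T‖ + ε with hMdef
  have hMpos : 0 < M := by positivity
  have hxM : ∀ n, ‖x n‖ ≤ M := by
    intro n
    have h1 := T.le_opNorm (y n)
    have h2 : ‖T‖ * ‖y n‖ ≤ ‖T‖ * 1 := mul_le_mul_of_nonneg_left (hy n) (norm_nonneg _)
    simp only [hxdef]
    nlinarith [norm_nonneg T]
  have hεM : ε ≤ M := le_add_of_nonneg_left (norm_nonneg _)
  set θ : ℝ := ε / (12 * M) with hθdef
  have hθpos : 0 < θ := by positivity
  have hθlt1 : θ < 1 := by
    rw [hθdef, div_lt_one (by positivity)]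
    nlinarith
  set t : ℕ → ℝ := fun n => θ ^ n with htdef
  have htpos : ∀ n, 0 < t n := fun n => pow_pos hθpos n
  have htle1 : ∀ n, t n ≤ 1 := fun n => pow_le_one₀ hθpos.le hθlt1.le
  have htmono : ∀ m n, m ≤ n → t n ≤ t m := fun m n h =>
    pow_le_pow_of_le_one hθpos.le hθlt1.le h
  set p : ℕ → X := fun n => t n • x n with hpdef
  set r : ℕ → ℝ := fun n => t n * (ε/6) with hrdef
  have hrpos : ∀ n, 0 < r n := fun n => by
    have := htpos n; rw [hrdef]; positivity
  -- bump data
  obtain ⟨x₀, hx₀⟩ := Function.ne_iff.1 hb_ne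
  have hβ : 0 < b x₀ := lt_of_le_of_ne (hb_nonneg x₀) (by simpa using (Ne.symm hx₀))
  obtain ⟨R, hR⟩ := (Metric.isBounded_iff_subset_closedBall 0).1 hb_supp
  set R' : ℝ := |R| + ‖x₀‖ + 1 with hR'def
  have hR'pos : 0 < R' := by positivity
  have hsupp' : ∀ v : X, b (x₀ + v) ≠ 0 → ‖v‖ ≤ R' := by
    intro v hv
    have h1 : x₀ + v ∈ tsupport b := subset_tsupport b hv
    have h2 : ‖x₀ + v‖ ≤ R := by
      have := hR h1; rwa [mem_closedBall, dist_zero_right] at this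
    have h3 : ‖v‖ ≤ ‖x₀ + v‖ + ‖x₀‖ := by
      have h4 := norm_sub_le (x₀ + v) x₀
      have h5 : x₀ + v - x₀ = v := by abel
      rw [h5] at h4; linarith
    have h6 : R ≤ |R| := le_abs_self R
    rw [hR'def]; linarith
  have hbB : ∀ w, b w ≤ |b 0| + K₀ * |R| := by
    intro w
    by_cases hw : w ∈ tsupport b
    · have h2 : ‖w‖ ≤ R := by
        have := hR hw; rwa [mem_closedBall, dist_zero_right] at this
      have h3 := lip_abs_le hb_lip w 0
      rw [sub_zero] at h3
      have h4 := (abs_le.1 h3).2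
      have h5 : (K₀:ℝ) * ‖w‖ ≤ K₀ * |R| :=
        mul_le_mul_of_nonneg_left (h2.trans (le_abs_self R)) K₀.coe_nonneg
      have h6 : b 0 ≤ |b 0| := le_abs_self _
      linarith
    · rw [image_eq_zero_of_notMem_tsupport hw]; positivity
  set ρ : ℕ → ℝ := fun n => r n / R' with hρdef
  have hρpos : ∀ n, 0 < ρ n := fun n => by
    have := hrpos n; rw [hρdef]; positivity
  set term : ℕ → X → ℝ := fun n z => t n * b (x₀ + (ρ n)⁻¹ • (z - p n)) with htermdef
  have hterm_nonneg : ∀ n z, 0 ≤ term n z := fun n z =>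
    mul_nonneg (htpos n).le (hb_nonneg _)
  have hterm_supp : ∀ n z, term n z ≠ 0 → ‖z - p n‖ ≤ r n := by
    intro n z hz
    have hb' : b (x₀ + (ρ n)⁻¹ • (z - p n)) ≠ 0 := by
      intro h0
      exact hz (by rw [htermdef]; simp only; rw [h0, mul_zero])
    have h1 := hsupp' _ hb'
    rw [norm_smul, norm_inv, Real.norm_eq_abs, abs_of_pos (hρpos n)] at h1
    have h2 : ‖z - p n‖ ≤ ρ n * R' := (inv_mul_le_iff₀ (hρpos n)).1 h1
    rwa [hρdef, div_mul_cancel₀ _ hR'pos.ne'] at h2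
  have hpnorm_lo : ∀ n, t n * (ε/2) ≤ ‖p n‖ := by
    intro n
    rw [hpdef]; simp only [norm_smul, Real.norm_eq_abs, abs_of_pos (htpos n)]
    exact mul_le_mul_of_nonneg_left (hlowx n) (htpos n).le
  have hpnorm_hi : ∀ n, ‖p n‖ ≤ t n * M := by
    intro n
    rw [hpdef]; simp only [norm_smul, Real.norm_eq_abs, abs_of_pos (htpos n)]
    exact mul_le_mul_of_nonneg_left (hxM n) (htpos n).le
  have hshell_lo : ∀ n z, term n z ≠ 0 → t n * (ε/3) ≤ ‖z‖ := by
    intro n z hz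
    have h1 := hterm_supp n z hz
    have h2 := hpnorm_lo n
    have h3 : ‖p n‖ - ‖z‖ ≤ ‖z - p n‖ := by
      have := norm_sub_norm_le (p n) z
      rwa [norm_sub_rev] at this
    rw [hrdef] at h1; simp only at h1
    linarith
  have hshell_hi : ∀ n z, term n z ≠ 0 → ‖z‖ ≤ t n * (2*M) := by
    intro n z hz
    have h1 := hterm_supp n z hz
    have h2 := hpnorm_hi n
    have h3 : ‖z‖ ≤ ‖p n‖ + ‖z - p n‖ := by
      have h4 := norm_add_le (p n) (z - p n)
      have h5 : p n + (z - p n) = z := by abel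
      rw [h5] at h4; linarith
    rw [hrdef] at h1; simp only at h1
    have h7 : ε/6 ≤ M := by linarith
    nlinarith [htpos n]
  have huniq : ∀ m n z, term m z ≠ 0 → term n z ≠ 0 → m = n := by
    have key : ∀ m n z, m < n → term m z ≠ 0 → term n z ≠ 0 → False := by
      intro m n z hmn hm hn
      have h1 := hshell_lo m z hm
      have h2 := hshell_hi n z hn
      have h3 : t n ≤ t (m+1) := htmono (m+1) n hmn
      have h4 : t (m+1) = θ * t m := by rw [htdef]; simp only; rw [pow_succ]; ring
      have h5 : θ * (2*M) = ε/6 := by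
        rw [hθdef]; field_simp; ring
      nlinarith [htpos m, htpos n, htpos (m+1)]
    intro m n z hm hn
    rcases lt_trichotomy m n with h | h | h
    · exact (key m n z h hm hn).elim
    · exact h
    · exact ((key n m z h hn hm).elim)
  set f : X → ℝ := fun z => ∑' n, term n z with hfdef
  have hf_single : ∀ m z, term m z ≠ 0 → f z = term m z := by
    intro m z hm
    rw [hfdef]
    exact tsum_eq_single m (fun n hn => by
      by_contra h0
      exact hn (huniq n m z h0 hm))
  have hf_zero : ∀ z, (∀ n, term n z = 0) → f z = 0 := by
    intro z hz
    rw [hfdef]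
    simp only
    rw [show (fun n => term n z) = fun _ => (0:ℝ) from funext hz]
    exact tsum_zero
  have hf_cases : ∀ z, ((∀ n, term n z = 0) ∧ f z = 0) ∨
      ∃ n, term n z ≠ 0 ∧ f z = term n z := by
    intro z
    by_cases hz : ∀ n, term n z = 0
    · exact Or.inl ⟨hz, hf_zero z hz⟩
    · push_neg at hz
      obtain ⟨n, hn⟩ := hz
      exact Or.inr ⟨n, hn, hf_single n z hn⟩
  have hf_nonneg : ∀ z, 0 ≤ f z := by
    intro z
    rcases hf_cases z with ⟨_, h0⟩ | ⟨n, _, h0⟩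
    · rw [h0]
    · rw [h0]; exact hterm_nonneg n z
  have hterm_le : ∀ n z, term n z ≤ f z := by
    intro n z
    by_cases hn : term n z = 0
    · rw [hn]; exact hf_nonneg z
    · rw [hf_single n z hn]
  -- boundedness
  have hterm_bd : ∀ n z, term n z ≤ |b 0| + K₀ * |R| := by
    intro n z
    have h1 : term n z ≤ b (x₀ + (ρ n)⁻¹ • (z - p n)) := by
      rw [htermdef]; simp only
      exact mul_le_of_le_one_left (hb_nonneg _) (htle1 n)
    exact h1.trans (hbB _)
  have hbound : ∀ z, |f z| ≤ |b 0| + K₀ * |R| := by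
    intro z
    rw [abs_of_nonneg (hf_nonneg z)]
    rcases hf_cases z with ⟨_, h0⟩ | ⟨n, _, h0⟩
    · rw [h0]; positivity
    · rw [h0]; exact hterm_bd n z
  -- Lipschitz
  set L : ℝ := K₀ * R' * 6 / ε with hLdef
  have hLnonneg : 0 ≤ L := by positivity
  have hρinv : ∀ n, t n * (ρ n)⁻¹ = 6 * R' / ε := by
    intro n
    rw [hρdef, hrdef]; simp only
    have := htpos n
    rw [inv_div, ← mul_div_assoc, div_eq_div_iff (by positivity) hε.ne']
    ring
  have hterm_lipL : ∀ n z w, term n z - term n w ≤ L * ‖z - w‖ := by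
    intro n z w
    have h1 : |b (x₀ + (ρ n)⁻¹ • (z - p n)) - b (x₀ + (ρ n)⁻¹ • (w - p n))|
        ≤ K₀ * ((ρ n)⁻¹ * ‖z - w‖) := by
      have h2 := lip_abs_le hb_lip (x₀ + (ρ n)⁻¹ • (z - p n)) (x₀ + (ρ n)⁻¹ • (w - p n))
      have he : (x₀ + (ρ n)⁻¹ • (z - p n)) - (x₀ + (ρ n)⁻¹ • (w - p n))
          = (ρ n)⁻¹ • (z - w) := by
        rw [add_sub_add_left_eq_sub, ← smul_sub]
        congr 1
        abel
      rw [he, norm_smul, norm_inv, Real.norm_eq_abs, abs_of_pos (hρpos n)] at h2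
      exact h2
    have h2 : term n z - term n w
        = t n * (b (x₀ + (ρ n)⁻¹ • (z - p n)) - b (x₀ + (ρ n)⁻¹ • (w - p n))) := by
      rw [htermdef]; ring
    have h3 := (abs_le.1 h1).2
    have h4 : t n * (b (x₀ + (ρ n)⁻¹ • (z - p n)) - b (x₀ + (ρ n)⁻¹ • (w - p n)))
        ≤ t n * (K₀ * ((ρ n)⁻¹ * ‖z - w‖)) :=
      mul_le_mul_of_nonneg_left h3 (htpos n).le
    have h5 : t n * (K₀ * ((ρ n)⁻¹ * ‖z - w‖)) = L * ‖z - w‖ := by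
      rw [hLdef]
      linear_combination (↑K₀ * ‖z - w‖) * hρinv n
    rw [h2]
    linarith
  have hlipf : LipschitzWith L.toNNReal f := by
    apply LipschitzWith.of_dist_le_mul
    intro z w
    rw [Real.dist_eq, dist_eq_norm, Real.coe_toNNReal L hLnonneg]
    have hzw : f z - f w ≤ L * ‖z - w‖ := by
      rcases hf_cases z with ⟨_, h0⟩ | ⟨n, _, h0⟩
      · rw [h0]
        have h1 := hf_nonneg w
        have h2 : (0:ℝ) ≤ L * ‖z - w‖ := by positivity
        linarith
      · rw [h0]
        have h1 := hterm_le n w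
        have h2 := hterm_lipL n z w
        linarith
    have hwz : f w - f z ≤ L * ‖z - w‖ := by
      rw [norm_sub_rev]
      rcases hf_cases w with ⟨_, h0⟩ | ⟨n, _, h0⟩
      · rw [h0]
        have h1 := hf_nonneg z
        have h2 : (0:ℝ) ≤ L * ‖w - z‖ := by positivity
        linarith
      · rw [h0]
        have h1 := hterm_le n z
        have h2 := hterm_lipL n w z
        linarith
    exact abs_sub_le_iff.2 ⟨hzw, hwz⟩
  -- Gateaux differentiability of each term
  have hterm_g : ∀ n z, GateauxDifferentiableAt (term n) z := by
    intro n z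
    obtain ⟨B, hB⟩ := hb_gateaux (x₀ + (ρ n)⁻¹ • (z - p n))
    refine ⟨(t n * (ρ n)⁻¹) • B, fun h => ?_⟩
    have h1 := hB ((ρ n)⁻¹ • h)
    have h2 := h1.const_smul (t n)
    have hval : ((t n * (ρ n)⁻¹) • B) h = t n • B ((ρ n)⁻¹ • h) := by
      rw [ContinuousLinearMap.smul_apply, map_smul]
      simp only [smul_eq_mul]
      ring
    rw [hval]
    refine Tendsto.congr (fun s => ?_) h2
    have harg : x₀ + (ρ n)⁻¹ • (z + s • h - p n)
        = (x₀ + (ρ n)⁻¹ • (z - p n)) + s • ((ρ n)⁻¹ • h) := by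
      module
    rw [htermdef]
    simp only
    rw [harg]
    simp only [smul_eq_mul]
    ring
  have htendt : Tendsto t atTop (𝓝 0) := by
    rw [htdef]
    exact tendsto_pow_atTop_nhds_zero_of_lt_one hθpos.le hθlt1
  have hg_ne : ∀ z : X, z ≠ 0 → GateauxDifferentiableAt f z := by
    intro z hz
    have hz' : 0 < ‖z‖ := norm_pos_iff.2 hz
    obtain ⟨N, hN⟩ : ∃ N, t N * (2*M) < ‖z‖/2 := by
      have h2 : Tendsto (fun n => t n * (2*M)) atTop (𝓝 0) := by
        simpa using htendt.mul_const (2*M)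
      exact (h2.eventually (gt_mem_nhds (by positivity : (0:ℝ) < ‖z‖/2))).exists
    have hgd := hasGateaux_finset_sum (Finset.range N) term
      (fun i => (hterm_g i z).choose) z (fun i _ => (hterm_g i z).choose_spec)
    refine ⟨_, hgd.congr_nhds ?_⟩
    have hopen : {w : X | ‖z‖/2 < ‖w‖} ∈ 𝓝 z := by
      have ho : IsOpen {w : X | ‖z‖/2 < ‖w‖} := isOpen_lt continuous_const continuous_norm
      refine ho.mem_nhds ?_
      simp only [Set.mem_setOf_eq]
      linarith
    filter_upwards [hopen] with w hw
    have hvan : ∀ n, N ≤ n → term n w = 0 := by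
      intro n hn
      by_contra h0
      have h1 := hshell_hi n w h0
      have h3 : t n ≤ t N := htmono N n hn
      have h4 : t n * (2*M) ≤ t N * (2*M) :=
        mul_le_mul_of_nonneg_right h3 (by positivity)
      exact lt_irrefl ‖w‖ ((h1.trans h4).trans_lt (hN.trans hw))
    rcases hf_cases w with ⟨hall, h0⟩ | ⟨m, hm, h0⟩
    · rw [h0]
      exact Finset.sum_eq_zero (fun i _ => hall i)
    · rw [h0]
      have hmN : m < N := by
        by_contra h'
        exact hm (hvan m (le_of_not_gt h'))
      refine Finset.sum_eq_single_of_mem m (Finset.mem_range.2 hmN) ?_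
      intro i _ hi
      by_contra h0'
      exact hi (huniq i m w h0' hm)
  -- f vanishes on lines through 0
  have hgood : ∀ (h : X) (n : ℕ), (¬ ∃ σ : ℝ, ‖x n - σ • h‖ ≤ ε/4) →
      ∀ s : ℝ, term n (s • h) = 0 := by
    intro h n hn s
    by_contra h0
    apply hn
    refine ⟨s / t n, ?_⟩
    have h5 := hterm_supp n _ h0
    have h6 : x n - (s / t n) • h = (t n)⁻¹ • (p n - s • h) := by
      rw [hpdef]
      simp only
      rw [smul_sub, inv_smul_smul₀ (htpos n).ne', smul_smul, div_eq_inv_mul]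
    rw [h6, norm_smul, norm_inv, Real.norm_eq_abs, abs_of_pos (htpos n), norm_sub_rev]
    have h7 : (t n)⁻¹ * ‖s • h - p n‖ ≤ (t n)⁻¹ * r n := by
      have := htpos n
      exact mul_le_mul_of_nonneg_left h5 (by positivity)
    have h8 : (t n)⁻¹ * r n = ε/6 := by
      rw [hrdef]
      simp only
      rw [← mul_assoc, inv_mul_cancel₀ (htpos n).ne', one_mul]
    linarith
  have hline : ∀ h : X, ∃ δ > 0, ∀ s : ℝ, |s| < δ → f (s • h) = 0 := by
    intro h
    have hbad := line_bad_finite hε x hsepx hxM h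
    set Bad := hbad.toFinset with hBaddef
    have key : ∀ s : ℝ, (∀ n ∈ Bad, ¬ (t n * (ε/3) ≤ |s| * ‖h‖)) → f (s • h) = 0 := by
      intro s hs
      apply hf_zero
      intro n
      by_cases hnB : n ∈ Bad
      · by_contra h0
        apply hs n hnB
        have h1 := hshell_lo n _ h0
        rwa [norm_smul, Real.norm_eq_abs] at h1
      · refine hgood h n ?_ s
        intro hex
        exact hnB (by rw [hBaddef, Set.Finite.mem_toFinset]; exact hex)
    by_cases hBne : Bad.Nonempty
    · refine ⟨Bad.inf' hBne (fun n => t n * (ε/3) / (‖h‖ + 1)), ?_, ?_⟩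
      · simp only [gt_iff_lt, Finset.lt_inf'_iff]
        intro n _
        have := htpos n
        positivity
      · intro s hs
        apply key
        intro n hnB hcon
        have hdle : Bad.inf' hBne (fun n => t n * (ε/3) / (‖h‖ + 1))
            ≤ t n * (ε/3) / (‖h‖ + 1) := Finset.inf'_le _ hnB
        have h1 : |s| < t n * (ε/3) / (‖h‖ + 1) := lt_of_lt_of_le hs hdle
        have h2 : |s| * (‖h‖ + 1) < t n * (ε/3) := by
          rw [lt_div_iff₀ (by positivity)] at h1
          exact h1
        have h3 : |s| * ‖h‖ ≤ |s| * (‖h‖ + 1) := by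
          have := abs_nonneg s
          nlinarith
        linarith
    · refine ⟨1, one_pos, fun s _ => ?_⟩
      apply key
      intro n hnB
      exact ((hBne ⟨n, hnB⟩).elim)
  have hf0 : f 0 = 0 := by
    apply hf_zero
    intro n
    by_contra h0
    have h1 := hshell_lo n 0 h0
    rw [norm_zero] at h1
    nlinarith [htpos n]
  have hg0 : HasGateauxDerivAt f (0 : X →L[ℝ] ℝ) 0 := by
    intro h
    obtain ⟨δ, hδ, h0⟩ := hline h
    have hev : (fun s : ℝ => s⁻¹ • (f (0 + s • h) - f 0)) =ᶠ[𝓝[≠](0:ℝ)]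
        (fun _ => (0:ℝ)) := by
      have hmem : ball (0:ℝ) δ ∈ 𝓝[≠](0:ℝ) :=
        mem_nhdsWithin_of_mem_nhds (ball_mem_nhds _ hδ)
      filter_upwards [hmem] with s hs
      rw [mem_ball, Real.dist_eq, sub_zero] at hs
      rw [zero_add, h0 s hs, hf0, sub_zero, smul_zero]
    have hz : ((0 : X →L[ℝ] ℝ) h) = 0 := rfl
    rw [hz]
    exact Tendsto.congr' hev.symm tendsto_const_nhds
  have hgat : ∀ z, GateauxDifferentiableAt f z := by
    intro z
    by_cases hz : z = 0
    · exact ⟨0, hz ▸ hg0⟩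
    · exact hg_ne z hz
  refine ⟨f, ⟨_, hbound⟩, ⟨L.toNNReal, hlipf⟩, hgat, ?_⟩
  intro hdiff
  have hD := hdiff.hasFDerivAt
  set D := fderiv ℝ (f ∘ T) 0 with hDdef
  have hDk : ∀ k : Y, D k = 0 := by
    intro k
    obtain ⟨δ, hδ, h0⟩ := hline (T k)
    have hev : ((f ∘ T) ∘ (fun s : ℝ => s • k)) =ᶠ[𝓝 (0:ℝ)] (fun _ => (0:ℝ)) := by
      filter_upwards [ball_mem_nhds (0:ℝ) hδ] with s hs
      rw [mem_ball, Real.dist_eq, sub_zero] at hs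
      have h1 : f (s • T k) = 0 := h0 s hs
      simp only [Function.comp_apply, map_smul]
      exact h1
    have hlinek : HasDerivAt (fun s : ℝ => s • k) k 0 := by
      simpa using (hasDerivAt_id (0:ℝ)).smul_const k
    have hcomp : HasDerivAt ((f ∘ T) ∘ (fun s : ℝ => s • k)) (D k) 0 := by
      have hD' : HasFDerivAt (f ∘ T) D ((fun s : ℝ => s • k) 0) := by
        simpa using hD
      exact hD'.comp_hasDerivAt 0 hlinek
    have hzero : HasDerivAt ((f ∘ T) ∘ (fun s : ℝ => s • k)) 0 0 :=
      (hasDerivAt_const (0:ℝ) (0:ℝ)).congr_of_eventuallyEq hev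
    exact hcomp.unique hzero
  have hq := hasFDerivAt_iff_tendsto.1 hD
  set kk : ℕ → Y := fun n => t n • y n with hkkdef
  have hknorm : ∀ n, ‖kk n‖ ≤ t n := by
    intro n
    rw [hkkdef]
    simp only [norm_smul, Real.norm_eq_abs, abs_of_pos (htpos n)]
    have h1 := hy n
    nlinarith [htpos n]
  have hk0 : Tendsto kk atTop (𝓝 0) := squeeze_zero_norm hknorm htendt
  have hcomp2 := hq.comp hk0
  have hTkk : ∀ n, T (kk n) = p n := by
    intro n
    rw [hkkdef, hpdef]
    simp only [map_smul]
    rfl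
  have hkkpos : ∀ n, 0 < ‖kk n‖ := by
    intro n
    rcases eq_or_lt_of_le (norm_nonneg (kk n)) with h' | h'
    · exfalso
      have hkk0 : kk n = 0 := by
        rw [← norm_eq_zero]
        exact h'.symm
      have h1 : p n = 0 := by rw [← hTkk n, hkk0, map_zero]
      have h2 := hpnorm_lo n
      rw [h1, norm_zero] at h2
      nlinarith [htpos n]
    · exact h'
  have hlb : ∀ n, b x₀ ≤ ‖kk n - 0‖⁻¹ * ‖(f ∘ T) (kk n) - (f ∘ T) 0 - D (kk n - 0)‖ := by
    intro n
    rw [sub_zero]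
    have h1 : (f ∘ T) (kk n) = f (p n) := by rw [Function.comp_apply, hTkk n]
    have h2 : (f ∘ T) 0 = 0 := by rw [Function.comp_apply, map_zero, hf0]
    have h3 : D (kk n) = 0 := hDk (kk n)
    rw [h1, h2, h3, sub_zero, sub_zero]
    have hterm_pn : term n (p n) = t n * b x₀ := by
      rw [htermdef]
      simp only
      rw [sub_self, smul_zero, add_zero]
    have h4 : t n * b x₀ ≤ f (p n) := by
      rw [← hterm_pn]
      exact hterm_le n (p n)
    have h6 : (t n)⁻¹ ≤ ‖kk n‖⁻¹ := by
      apply inv_anti₀ (hkkpos n) (hknorm n)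
    calc b x₀ = (t n)⁻¹ * (t n * b x₀) := by
          rw [← mul_assoc, inv_mul_cancel₀ (htpos n).ne', one_mul]
      _ ≤ ‖kk n‖⁻¹ * ‖f (p n)‖ := by
          apply mul_le_mul h6 ?_ ?_ (by positivity)
          · rw [Real.norm_eq_abs, abs_of_nonneg (hf_nonneg _)]
            exact h4
          · have := htpos n
            positivity
  obtain ⟨n, hn⟩ := (hcomp2.eventually (gt_mem_nhds hβ)).exists
  exact absurd (hlb n) (not_le.2 hn)
end Bad

/-- Let `X`, `Y` be Banach spaces and `T : Y → X` a bounded linear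
operator. Assume `X` admits a Lipschitz, everywhere Gâteaux differentiable bump function
(nonnegative, not identically zero, with bounded support). Then `T` is compact if and
only if for every bounded Lipschitz function `f : X → ℝ` which is Gâteaux differentiable
everywhere, `f ∘ T` is Fréchet differentiable at every point of `Y`. -/
theorem compact_iff_gateaux_implies_frechet_of_bump
    {X Y : Type*} [NormedAddCommGroup X] [NormedSpace ℝ X] [CompleteSpace X]
    [NormedAddCommGroup Y] [NormedSpace ℝ Y] [CompleteSpace Y]
    (T : Y →L[ℝ] X)
    (b : X → ℝ) (hb_nonneg : ∀ x, 0 ≤ b x) (hb_ne : b ≠ 0)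
    (hb_lip : ∃ K : NNReal, LipschitzWith K b)
    (hb_gateaux : ∀ x, GateauxDifferentiableAt b x)
    (hb_supp : Bornology.IsBounded (tsupport b)) :
    IsCompact (closure (⇑T '' closedBall 0 1)) ↔
      ∀ f : X → ℝ, (∃ C : ℝ, ∀ x, |f x| ≤ C) → (∃ K : NNReal, LipschitzWith K f) →
        (∀ x, GateauxDifferentiableAt f x) →
          ∀ y : Y, DifferentiableAt ℝ (f ∘ T) y := by
  constructor
  · intro hcpt f _ hlip hg y
    obtain ⟨L, hL⟩ := hlip
    exact forward_dir T hcpt f hL hg y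
  · intro H
    by_contra hnc
    obtain ⟨K₀, hK₀⟩ := hb_lip
    obtain ⟨ε, hε, x', hx'mem, hx'sep⟩ := exists_sep_seq hnc
    have hch : ∀ n, ∃ yy : Y, ‖yy‖ ≤ 1 ∧ T yy = x' n := by
      intro n
      obtain ⟨yy, hyy, hTyy⟩ := hx'mem n
      exact ⟨yy, by rwa [mem_closedBall, dist_zero_right] at hyy, hTyy⟩
    choose y' hy'1 hy'2 using hch
    have hmain : ∃ yy : ℕ → Y, (∀ n, ‖yy n‖ ≤ 1) ∧ (∀ n, ε/2 ≤ ‖T (yy n)‖) ∧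
        (∀ a c, a ≠ c → ε ≤ ‖T (yy a) - T (yy c)‖) := by
      by_cases hex : ∃ m, ‖x' m‖ < ε/2
      · obtain ⟨m, hm⟩ := hex
        refine ⟨fun n => y' (if n < m then n else n + 1), fun n => hy'1 _, ?_, ?_⟩
        · intro n
          rw [hy'2]
          have hne : (if n < m then n else n + 1) ≠ m := by split <;> omega
          by_contra h'
          push_neg at h'
          have hs := hx'sep _ m hne
          have ht := norm_sub_le (x' (if n < m then n else n + 1)) (x' m)
          have ht2 : ‖x' (if n < m then n else n + 1) - x' m‖
              ≤ ‖x' (if n < m then n else n + 1)‖ + ‖x' m‖ := norm_sub_le _ _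
          linarith
        · intro a c h
          rw [hy'2, hy'2]
          refine hx'sep _ _ ?_
          split <;> split <;> omega
      · push_neg at hex
        exact ⟨y', hy'1, fun n => by rw [hy'2]; exact hex n,
          fun a c h => by rw [hy'2, hy'2]; exact hx'sep a c h⟩
    obtain ⟨yy, h1, h2, h3⟩ := hmain
    obtain ⟨f, hf1, hf2, hf3, hf4⟩ := exists_bad T b hb_nonneg hb_ne hK₀
      hb_gateaux hb_supp hε yy h1 h2 h3
    exact hf4 (H f hf1 hf2 hf3 0)
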